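/- Let a > 0 and define B(t) = e^{-a t}. Suppose g : [T₀, T] → ℝ is continuous, g(T) = 0, and whenever g(s) ≤ B(s) for all s in some subinterval [t₁, T], it follows that g(s)² ≤ (C/a) e^{-2 a s} for all s ∈ [t₁, T], where C > 0 is a fixed constant. If a > 4C, then g(t) ≤ (1/2) e^{-a t} for all t ∈ [T₀, T]. -/
import Mathlib


/-- Closing the bootstrap: if `g(T) = 0` and the bootstrap assumption
`g ≤ e^{-as}` on `[t₁,T]` always improves to `g² ≤ (C/a) e^{-2as}` there,
then for `a > 4C` one has `g ≤ (1/2) e^{-at}` on `[T₀, T]`. -/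
theorem bootstrap_closing (T₀ T a C : ℝ) (hT : T₀ ≤ T) (ha : 0 < a) (hC : 0 < C)
    (g : ℝ → ℝ) (hg : ContinuousOn g (Set.Icc T₀ T)) (hgT : g T = 0)
    (hboot : ∀ t₁ ∈ Set.Icc T₀ T,
      (∀ s ∈ Set.Icc t₁ T, g s ≤ Real.exp (-a * s)) →
      ∀ s ∈ Set.Icc t₁ T, g s ^ 2 ≤ (C / a) * Real.exp (-2 * a * s))
    (haC : 4 * C < a) :
    ∀ t ∈ Set.Icc T₀ T, g t ≤ (1 / 2) * Real.exp (-a * t) := by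
  set S : Set ℝ := {t | t ∈ Set.Icc T₀ T ∧
      ∀ s ∈ Set.Icc t T, g s ≤ (1 / 2) * Real.exp (-a * s)} with hS
  have hTS : T ∈ S := by
    refine ⟨⟨hT, le_refl T⟩, fun s hs => ?_⟩
    have : s = T := le_antisymm hs.2 hs.1
    rw [this, hgT]
    positivity
  have hne : S.Nonempty := ⟨T, hTS⟩
  have hbdd : BddBelow S := ⟨T₀, fun x hx => hx.1.1⟩
  set m := sInf S with hm
  have hmT₀ : T₀ ≤ m := le_csInf hne fun x hx => hx.1.1
  have hmT : m ≤ T := csInf_le hbdd hTS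
  have hmIcc : m ∈ Set.Icc T₀ T := ⟨hmT₀, hmT⟩
  -- the bound holds strictly above m
  have hgt : ∀ s ∈ Set.Ioc m T, g s ≤ (1 / 2) * Real.exp (-a * s) := by
    intro s hs
    obtain ⟨t, htS, hts⟩ := exists_lt_of_csInf_lt hne hs.1
    exact htS.2 s ⟨le_of_lt hts, hs.2⟩
  -- m itself belongs to S
  have hmS : m ∈ S := by
    refine ⟨hmIcc, fun s hs => ?_⟩
    rcases eq_or_lt_of_le hs.1 with h | h
    · rcases eq_or_lt_of_le hmT with hmt | hmt
      · rw [← h, hmt, hgT]; positivity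
      · have hcont : ContinuousWithinAt g (Set.Ioc m T) m := by
          have := (hg m hmIcc).mono (Set.Ioc_subset_Icc_self.trans
            (Set.Icc_subset_Icc hmT₀ le_rfl))
          exact this
        have hcont2 : ContinuousWithinAt (fun s => (1 / 2) * Real.exp (-a * s))
            (Set.Ioc m T) m :=
          Continuous.continuousWithinAt (continuous_const.mul
            (Real.continuous_exp.comp (continuous_const.mul continuous_id)))
        have hne2 : (nhdsWithin m (Set.Ioc m T)).NeBot := left_nhdsWithin_Ioc_neBot hmt
        have := le_of_tendsto_of_tendsto hcont hcont2
          (eventually_nhdsWithin_of_forall hgt)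
        rw [← h]; exact this
    · exact hgt s ⟨h, hs.2⟩
  -- conclude if m = T₀
  rcases eq_or_lt_of_le hmT₀ with hmeq | hmlt
  · intro t ht
    exact hmS.2 t ⟨hmeq ▸ ht.1, ht.2⟩
  -- otherwise derive a contradiction
  exfalso
  -- strict improvement on [m, T]
  have hsqrt : Real.sqrt (C / a) < 1 / 2 := by
    rw [Real.sqrt_lt' (by norm_num)]
    rw [div_lt_iff₀ ha]
    nlinarith
  have hstrict : ∀ s ∈ Set.Icc m T, g s < (1 / 2) * Real.exp (-a * s) := by
    have hb := hboot m hmIcc (fun s hs => by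
      have h1 := hmS.2 s hs
      have h2 : (1 / 2 : ℝ) * Real.exp (-a * s) ≤ Real.exp (-a * s) := by
        nlinarith [Real.exp_pos (-a * s)]
      linarith)
    intro s hs
    have hb' := hb s hs
    have h2 : g s ≤ Real.sqrt (C / a) * Real.exp (-a * s) := by
      calc g s ≤ |g s| := le_abs_self _
        _ = Real.sqrt (g s ^ 2) := (Real.sqrt_sq_eq_abs _).symm
        _ ≤ Real.sqrt ((C / a) * Real.exp (-2 * a * s)) := Real.sqrt_le_sqrt hb'
        _ = Real.sqrt (C / a) * Real.exp (-a * s) := by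
            rw [Real.sqrt_mul (by positivity)]
            congr 1
            rw [show Real.exp (-2 * a * s) = Real.exp (-a * s) ^ 2 by
              rw [sq, ← Real.exp_add]; ring_nf, Real.sqrt_sq (Real.exp_pos _).le]
    have h3 : Real.sqrt (C / a) * Real.exp (-a * s) < (1 / 2) * Real.exp (-a * s) :=
      mul_lt_mul_of_pos_right hsqrt (Real.exp_pos _)
    linarith
  -- positivity of the gap function near m
  set f : ℝ → ℝ := fun s => (1 / 2) * Real.exp (-a * s) - g s with hf
  have hfc : ContinuousWithinAt f (Set.Icc T₀ T) m := by
    apply ContinuousWithinAt.sub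
    · exact Continuous.continuousWithinAt (continuous_const.mul
        (Real.continuous_exp.comp (continuous_const.mul continuous_id)))
    · exact hg m hmIcc
  have hfm : 0 < f m := by
    have := hstrict m ⟨le_rfl, hmT⟩
    simp only [hf]; linarith
  have hev : ∀ᶠ s in nhdsWithin m (Set.Icc T₀ T), 0 < f s :=
    hfc.eventually (eventually_gt_nhds hfm)
  rw [Filter.eventually_iff, Metric.mem_nhdsWithin_iff] at hev
  obtain ⟨ε, hε, hball⟩ := hev
  set t' := max T₀ (m - ε / 2) with ht'
  have ht'm : t' < m := by
    apply max_lt hmlt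
    linarith
  have ht'Icc : t' ∈ Set.Icc T₀ T := ⟨le_max_left _ _, le_trans ht'm.le hmT⟩
  have ht'S : t' ∈ S := by
    refine ⟨ht'Icc, fun s hs => ?_⟩
    rcases le_or_gt m s with h | h
    · exact hmS.2 s ⟨h, hs.2⟩
    · have hsIcc : s ∈ Set.Icc T₀ T := ⟨le_trans ht'Icc.1 hs.1, hs.2⟩
      have hd : dist s m < ε := by
        rw [Real.dist_eq, abs_of_nonpos (by linarith)]
        have : m - ε / 2 ≤ t' := le_max_right _ _
        have := hs.1
        linarith
      have := hball ⟨Metric.mem_ball.mpr hd, hsIcc⟩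
      simp only [hf, Set.mem_setOf_eq] at this
      linarith
  have : m ≤ t' := csInf_le hbdd ht'S
  linarith
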